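/- Let Q be a topological quiver and define for each n ≥ 1 the set Lₙ of base points of loops of length n with no exits, and Lₙˢ = Lₙ \ (L₁ ∪ ⋯ ∪ Lₙ₋₁) the base points of simple loops of length n with no exits. Then L∞ := ∪ₙ Lₙ has empty interior if and only if Lₙˢ has empty interior for all n. -/

import Mathlib

/-- A finite path in a topological quiver: a sequence of `n+1` edges in which the range
of each edge equals the source of the next. -/
structure QPath {E₀ E₁ : Type*} (r s : E₁ → E₀) where
  n : ℕ
  edges : Fin (n + 1) → E₁
  chain : ∀ i : Fin n, r (edges i.castSucc) = s (edges i.succ)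

variable {E₀ E₁ : Type*}

/-- `p` is a loop based at `v`. -/
def QPath.IsLoopAt {r s : E₁ → E₀} (p : QPath r s) (v : E₀) : Prop :=
  s (p.edges 0) = v ∧ r (p.edges (Fin.last p.n)) = v

/-- `p` has no exits: any edge with the same source as an edge of `p` is that edge. -/
def QPath.NoExit {r s : E₁ → E₀} (p : QPath r s) : Prop :=
  ∀ (β : E₁) (k : Fin (p.n + 1)), s β = s (p.edges k) → β = p.edges k

/-- `LBase r s n` is the set of base points of loops of length `n` with no exits. -/
def LBase (r s : E₁ → E₀) (n : ℕ) : Set E₀ :=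
  {v | ∃ p : QPath r s, p.n + 1 = n ∧ p.IsLoopAt v ∧ p.NoExit}

namespace TQ18

open Fin.NatCast

variable {r s : E₁ → E₀}

lemma chain_cyc (p : QPath r s) {v : E₀} (hl : p.IsLoopAt v) (j : Fin (p.n + 1)) :
    r (p.edges j) = s (p.edges (j + 1)) := by
  rcases eq_or_ne j (Fin.last p.n) with h | h
  · subst h
    rw [Fin.last_add_one]
    exact hl.2.trans hl.1.symm
  · obtain ⟨i, rfl⟩ := Fin.exists_castSucc_eq.mpr h
    rw [Fin.coeSucc_eq_succ]
    exact p.chain i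

def rot (p : QPath r s) {v : E₀} (hl : p.IsLoopAt v) (k : Fin (p.n + 1)) : QPath r s where
  n := p.n
  edges := fun i => p.edges (i + k)
  chain := fun i => by
    have h := chain_cyc p hl (i.castSucc + k)
    rwa [add_right_comm, Fin.coeSucc_eq_succ] at h

lemma rot_isLoopAt (p : QPath r s) {v : E₀} (hl : p.IsLoopAt v) (k : Fin (p.n + 1)) :
    (rot p hl k).IsLoopAt (s (p.edges k)) := by
  constructor
  · show s (p.edges (0 + k)) = s (p.edges k)
    rw [zero_add]
  · show r (p.edges (Fin.last p.n + k)) = s (p.edges k)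
    rw [chain_cyc p hl]
    congr 1
    rw [add_right_comm, Fin.last_add_one, zero_add]

lemma rot_noExit (p : QPath r s) {v : E₀} (hl : p.IsLoopAt v) (k : Fin (p.n + 1))
    (he : p.NoExit) : (rot p hl k).NoExit := by
  show ∀ (β : E₁) (i : Fin (p.n + 1)), s β = s (p.edges (i + k)) → β = p.edges (i + k)
  exact fun β i h => he β (i + k) h

lemma mem_of_rot (p : QPath r s) {v : E₀} (hl : p.IsLoopAt v) (he : p.NoExit)
    (k : Fin (p.n + 1)) : s (p.edges k) ∈ LBase r s (p.n + 1) :=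
  ⟨rot p hl k, rfl, rot_isLoopAt p hl k, rot_noExit p hl k he⟩

lemma exists_loop {v : E₀} (hv : v ∈ ⋃ n, LBase r s n) :
    ∃ p : QPath r s, p.IsLoopAt v ∧ p.NoExit := by
  obtain ⟨_, ⟨n, rfl⟩, p, _, hl, he⟩ := hv
  exact ⟨p, hl, he⟩

lemma uniq {v : E₀} (hv : v ∈ ⋃ n, LBase r s n) {β β' : E₁}
    (h : s β = v) (h' : s β' = v) : β = β' := by
  obtain ⟨p, hl, he⟩ := exists_loop hv
  rw [he β 0 (h.trans hl.1.symm), he β' 0 (h'.trans hl.1.symm)]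


open Classical in
noncomputable def nxtE (s : E₁ → E₀) [Nonempty E₁] (v : E₀) : E₁ :=
  if h : ∃ β, s β = v then h.choose else Classical.arbitrary E₁

lemma nxtE_spec {s : E₁ → E₀} [Nonempty E₁] {v : E₀} (h : ∃ β, s β = v) :
    s (nxtE s v) = v := by
  rw [nxtE, dif_pos h]
  exact h.choose_spec

noncomputable def vertSeq (r s : E₁ → E₀) [Nonempty E₁] (w : E₀) : ℕ → E₀
  | 0 => w
  | i + 1 => r (nxtE s (vertSeq r s w i))

lemma trace [Nonempty E₁] (q : QPath r s) {w : E₀} (hl : q.IsLoopAt w) (he : q.NoExit) :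
    ∀ i : ℕ, vertSeq r s w i = s (q.edges ((i : ℕ) : Fin (q.n + 1))) ∧
      nxtE s (vertSeq r s w i) = q.edges ((i : ℕ) : Fin (q.n + 1)) := by
  intro i
  induction i with
  | zero =>
    have h0 : vertSeq r s w 0 = s (q.edges ((0 : ℕ) : Fin (q.n + 1))) := by
      rw [Nat.cast_zero]; exact hl.1.symm
    refine ⟨h0, ?_⟩
    have hex : ∃ β, s β = vertSeq r s w 0 := ⟨q.edges ((0 : ℕ) : Fin (q.n + 1)), h0.symm⟩
    exact he _ _ ((nxtE_spec hex).trans h0)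
  | succ i ih =>
    have h1 : vertSeq r s w (i + 1) = s (q.edges (((i : ℕ) + 1 : ℕ) : Fin (q.n + 1))) := by
      show r (nxtE s (vertSeq r s w i)) = _
      rw [ih.2, Nat.cast_add_one, ← chain_cyc q hl]
    refine ⟨h1, ?_⟩
    have hex : ∃ β, s β = vertSeq r s w (i + 1) := ⟨q.edges _, h1.symm⟩
    exact he _ _ ((nxtE_spec hex).trans h1)

lemma cast_mul_sub_one (a b : ℕ) :
    (((a + 1) * (b + 1) - 1 : ℕ) : Fin (a + 1)) = Fin.last a := by
  apply Fin.ext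
  rw [Fin.val_natCast]
  have h : (a + 1) * (b + 1) - 1 = a + (a + 1) * b := by
    have : (a + 1) * (b + 1) = (a + 1) * b + (a + 1) := by ring
    omega
  rw [h, Nat.add_mul_mod_self_left, Nat.mod_eq_of_lt (Nat.lt_succ_self a)]
  rfl

lemma rInj {β β' : E₁} (hβ : s β ∈ ⋃ n, LBase r s n) (hβ' : s β' ∈ ⋃ n, LBase r s n)
    (hrr : r β = r β') : β = β' := by
  haveI : Nonempty E₁ := ⟨β⟩
  obtain ⟨p, hl, he⟩ := exists_loop hβ
  obtain ⟨p', hl', he'⟩ := exists_loop hβ'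
  have hb : β = p.edges 0 := he β 0 hl.1.symm
  have hb' : β' = p'.edges 0 := he' β' 0 hl'.1.symm
  have hw1 : r β = s (p.edges (0 + 1)) := by rw [hb]; exact chain_cyc p hl 0
  have hw2 : r β' = s (p'.edges (0 + 1)) := by rw [hb']; exact chain_cyc p' hl' 0
  rw [zero_add] at hw1 hw2
  -- rotated loops based at w := r β
  have hq : (rot p hl 1).IsLoopAt (r β) := hw1 ▸ rot_isLoopAt p hl 1
  have hq' : (rot p' hl' 1).IsLoopAt (r β) := by
    rw [hrr, hw2]; exact rot_isLoopAt p' hl' 1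
  set N := (p.n + 1) * (p'.n + 1) - 1 with hN
  have t1 := (trace (rot p hl 1) hq (rot_noExit p hl 1 he) N).2
  have t2 := (trace (rot p' hl' 1) hq' (rot_noExit p' hl' 1 he') N).2
  rw [t1] at t2
  -- identify the edges
  have e1 : (rot p hl 1).edges ((N : ℕ) : Fin ((rot p hl 1).n + 1)) = β := by
    show p.edges (((N : ℕ) : Fin (p.n + 1)) + 1) = β
    rw [hN, cast_mul_sub_one, Fin.last_add_one, hb]
  have e2 : (rot p' hl' 1).edges ((N : ℕ) : Fin ((rot p' hl' 1).n + 1)) = β' := by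
    show p'.edges (((N : ℕ) : Fin (p'.n + 1)) + 1) = β'
    have : N = (p'.n + 1) * (p.n + 1) - 1 := by rw [hN, Nat.mul_comm]
    rw [this, cast_mul_sub_one, Fin.last_add_one, hb']
  rw [e1, e2] at t2
  exact t2
section Top

variable [TopologicalSpace E₀] [TopologicalSpace E₁]

lemma rO_sub (hro : IsOpenMap r) (hs : Continuous s) :
    r '' (s ⁻¹' interior (⋃ n, LBase r s n)) ⊆ interior (⋃ n, LBase r s n) := by
  apply interior_maximal _ (hro _ (isOpen_interior.preimage hs))
  rintro x ⟨β, hβ, rfl⟩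
  have hU : s β ∈ ⋃ n, LBase r s n := interior_subset hβ
  obtain ⟨p, hl, he⟩ := exists_loop hU
  have hb : β = p.edges 0 := he β 0 hl.1.symm
  have hrb : r β = s (p.edges (0 + 1)) := by rw [hb]; exact chain_cyc p hl 0
  rw [hrb]
  exact Set.mem_iUnion.2 ⟨p.n + 1, mem_of_rot p hl he (0 + 1)⟩

lemma verts_mem (hro : IsOpenMap r) (hs : Continuous s) (p : QPath r s) {v : E₀}
    (hl : p.IsLoopAt v) (he : p.NoExit) (hv : v ∈ interior (⋃ n, LBase r s n)) :
    ∀ i : Fin (p.n + 1), s (p.edges i) ∈ interior (⋃ n, LBase r s n) := by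
  suffices h : ∀ i : ℕ, s (p.edges ((i : ℕ) : Fin (p.n + 1))) ∈ interior (⋃ n, LBase r s n) by
    intro i
    have := h i.val
    rwa [Fin.cast_val_eq_self] at this
  intro i
  induction i with
  | zero => rw [Nat.cast_zero, hl.1]; exact hv
  | succ i ih =>
    rw [Nat.cast_add_one, ← chain_cyc p hl]
    exact rO_sub hro hs ⟨p.edges ((i : ℕ) : Fin (p.n + 1)), ih, rfl⟩

open Classical in
noncomputable def eMap (r s : E₁ → E₀) [TopologicalSpace E₀] [Nonempty E₁] (u : E₀) : E₁ :=
  if h : ∃ β, s β ∈ interior (⋃ n, LBase r s n) ∧ r β = u then h.choose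
  else Classical.arbitrary E₁

open Classical in
noncomputable def Gmap (r s : E₁ → E₀) [TopologicalSpace E₀] [Nonempty E₁] (u : E₀) : E₀ :=
  if ∃ β, s β ∈ interior (⋃ n, LBase r s n) ∧ r β = u then s (eMap r s u) else u

lemma eMap_spec [Nonempty E₁] {u : E₀}
    (h : ∃ β, s β ∈ interior (⋃ n, LBase r s n) ∧ r β = u) :
    s (eMap r s u) ∈ interior (⋃ n, LBase r s n) ∧ r (eMap r s u) = u := by
  rw [eMap, dif_pos h]
  exact h.choose_spec

lemma Gmap_eq [Nonempty E₁] {u : E₀}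
    (h : ∃ β, s β ∈ interior (⋃ n, LBase r s n) ∧ r β = u) :
    Gmap r s u = s (eMap r s u) := by
  rw [Gmap, if_pos h]

lemma exists_pre (hro : IsOpenMap r) (hs : Continuous s) {u : E₀}
    (hu : u ∈ interior (⋃ n, LBase r s n)) :
    ∃ β, s β ∈ interior (⋃ n, LBase r s n) ∧ r β = u := by
  obtain ⟨p, hl, he⟩ := exists_loop (interior_subset hu)
  exact ⟨p.edges (Fin.last p.n), verts_mem hro hs p hl he hu (Fin.last p.n), hl.2⟩

lemma Gmap_val (hro : IsOpenMap r) (hs : Continuous s) [Nonempty E₁] {u : E₀} {β : E₁}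
    (hβ : s β ∈ interior (⋃ n, LBase r s n)) (hrβ : r β = u) :
    Gmap r s u = s β := by
  have h : ∃ β, s β ∈ interior (⋃ n, LBase r s n) ∧ r β = u := ⟨β, hβ, hrβ⟩
  rw [Gmap_eq h]
  congr 1
  exact rInj (interior_subset (eMap_spec h).1) (interior_subset hβ)
    ((eMap_spec h).2.trans hrβ.symm)

lemma Gmap_mem (hro : IsOpenMap r) (hs : Continuous s) [Nonempty E₁] {u : E₀}
    (hu : u ∈ interior (⋃ n, LBase r s n)) :
    Gmap r s u ∈ interior (⋃ n, LBase r s n) := by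
  rw [Gmap_eq (exists_pre hro hs hu)]
  exact (eMap_spec (exists_pre hro hs hu)).1

lemma Gmap_contAt (hro : IsOpenMap r) (hs : Continuous s) [Nonempty E₁] {v : E₀}
    (hv : v ∈ interior (⋃ n, LBase r s n)) : ContinuousAt (Gmap r s) v := by
  obtain ⟨β, hβ, hrβ⟩ := exists_pre hro hs hv
  have hG : Gmap r s v = s β := Gmap_val hro hs hβ hrβ
  rw [ContinuousAt, hG]
  intro N hN
  obtain ⟨N', hN'sub, hN'o, hβN'⟩ := mem_nhds_iff.mp hN
  have hWo : IsOpen (r '' (s ⁻¹' (interior (⋃ n, LBase r s n) ∩ N'))) :=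
    hro _ ((isOpen_interior.inter hN'o).preimage hs)
  have hvW : v ∈ r '' (s ⁻¹' (interior (⋃ n, LBase r s n) ∩ N')) := ⟨β, ⟨hβ, hβN'⟩, hrβ⟩
  rw [Filter.mem_map]
  apply Filter.mem_of_superset (hWo.mem_nhds hvW)
  rintro x ⟨β', ⟨hβ'V, hβ'N⟩, rfl⟩
  have : Gmap r s (r β') = s β' := Gmap_val hro hs hβ'V rfl
  show Gmap r s (r β') ∈ N
  rw [this]
  exact hN'sub hβ'N

end Top
section Fix

variable [TopologicalSpace E₀] [TopologicalSpace E₁]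

lemma fix_of_mem (hro : IsOpenMap r) (hs : Continuous s) [Nonempty E₁] {v : E₀} {n : ℕ}
    (hv : v ∈ interior (⋃ m, LBase r s m)) (hvn : v ∈ LBase r s n) :
    (Gmap r s)^[n] v = v := by
  obtain ⟨p, hpn, hl, he⟩ := hvn
  subst hpn
  have hw : ∀ i : ℕ, Gmap r s (s (p.edges (((i : ℕ) + 1 : ℕ) : Fin (p.n + 1)))) =
      s (p.edges ((i : ℕ) : Fin (p.n + 1))) := by
    intro i
    apply Gmap_val hro hs (verts_mem hro hs p hl he hv _)
    rw [Nat.cast_add_one, ← chain_cyc p hl]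
  have key : ∀ k : ℕ, (Gmap r s)^[k] (s (p.edges ((k : ℕ) : Fin (p.n + 1)))) =
      s (p.edges ((0 : ℕ) : Fin (p.n + 1))) := by
    intro k
    induction k with
    | zero => rfl
    | succ k ih =>
      rw [Function.iterate_succ_apply, hw k, ih]
  have h1 := key (p.n + 1)
  have h2 : ((p.n + 1 : ℕ) : Fin (p.n + 1)) = ((0 : ℕ) : Fin (p.n + 1)) := by
    apply Fin.ext
    rw [Fin.val_natCast, Nat.mod_self]
    rfl
  rw [h2] at h1
  have h3 : s (p.edges ((0 : ℕ) : Fin (p.n + 1))) = v := by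
    rw [Nat.cast_zero]; exact hl.1
  rw [h3] at h1
  exact h1

lemma mem_of_fix (hro : IsOpenMap r) (hs : Continuous s) [Nonempty E₁] {v : E₀} {n : ℕ}
    (hn : 1 ≤ n) (hv : v ∈ interior (⋃ m, LBase r s m))
    (hfix : (Gmap r s)^[n] v = v) : v ∈ LBase r s n := by
  have hiter : ∀ i : ℕ, (Gmap r s)^[i] v ∈ interior (⋃ m, LBase r s m) := by
    intro i
    induction i with
    | zero => exact hv
    | succ i ih => rw [Function.iterate_succ_apply']; exact Gmap_mem hro hs ih
  have hspec : ∀ i : ℕ,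
      s (eMap r s ((Gmap r s)^[i] v)) = (Gmap r s)^[i + 1] v ∧
      r (eMap r s ((Gmap r s)^[i] v)) = (Gmap r s)^[i] v ∧
      s (eMap r s ((Gmap r s)^[i] v)) ∈ interior (⋃ m, LBase r s m) := by
    intro i
    have h := exists_pre hro hs (hiter i)
    refine ⟨?_, (eMap_spec h).2, (eMap_spec h).1⟩
    rw [← Gmap_eq h, Function.iterate_succ_apply']
  have hexp : ∀ a b : ℕ, a = b → (Gmap r s)^[a] v = (Gmap r s)^[b] v := by
    intro a b h; rw [h]
  refine ⟨⟨n - 1, fun k => eMap r s ((Gmap r s)^[n - 1 - (k : ℕ)] v), ?_⟩,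
    (by show n - 1 + 1 = n; omega), ⟨?_, ?_⟩, ?_⟩
  case _ =>
    intro i
    show r (eMap r s ((Gmap r s)^[n - 1 - (i.castSucc : ℕ)] v)) =
      s (eMap r s ((Gmap r s)^[n - 1 - (i.succ : ℕ)] v))
    rw [(hspec _).2.1, (hspec _).1, Fin.coe_castSucc, Fin.val_succ]
    apply hexp
    have := i.isLt
    omega
  · show s (eMap r s ((Gmap r s)^[n - 1 - ((0 : Fin (n - 1 + 1)) : ℕ)] v)) = v
    rw [(hspec _).1]
    have h0 : ((0 : Fin (n - 1 + 1)) : ℕ) = 0 := rfl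
    rw [h0]
    rw [hexp (n - 1 - 0 + 1) n (by omega)]
    exact hfix
  · show r (eMap r s ((Gmap r s)^[n - 1 - ((Fin.last (n - 1) : Fin (n - 1 + 1)) : ℕ)] v)) = v
    rw [(hspec _).2.1, Fin.val_last, hexp (n - 1 - (n - 1)) 0 (by omega)]
    rfl
  · intro β k hsb
    have hk : s (eMap r s ((Gmap r s)^[n - 1 - (k : ℕ)] v)) ∈ interior (⋃ m, LBase r s m) :=
      (hspec _).2.2
    exact uniq (interior_subset hk) hsb rfl

end Fix
lemma open_sub_finite_closed {X : Type*} [TopologicalSpace X] (C : ℕ → Set X)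
    (hC : ∀ k, IsClosed (C k)) (t : Finset ℕ) :
    ∀ W : Set X, IsOpen W → W.Nonempty → W ⊆ ⋃ k ∈ t, C k →
      ∃ k ∈ t, ∃ W' : Set X, IsOpen W' ∧ W'.Nonempty ∧ W' ⊆ C k ∩ W := by
  induction t using Finset.induction with
  | empty =>
    intro W _ hne hsub
    obtain ⟨x, hx⟩ := hne
    simpa using hsub hx
  | @insert a t ha ih =>
    intro W hWo hWne hWsub
    by_cases hne : (W \ ⋃ k ∈ t, C k).Nonempty
    · refine ⟨a, Finset.mem_insert_self a t, W \ ⋃ k ∈ t, C k,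
        hWo.sdiff (Set.Finite.isClosed_biUnion t.finite_toSet fun k _ => hC k), hne, ?_⟩
      rintro x ⟨hxW, hxn⟩
      refine ⟨?_, hxW⟩
      have := hWsub hxW
      simp only [Finset.mem_insert, Set.mem_iUnion] at this
      obtain ⟨k, hk1 | hk2, hk3⟩ := this
      · rwa [hk1] at hk3
      · exact absurd (Set.mem_biUnion hk2 hk3) hxn
    · rw [Set.not_nonempty_iff_eq_empty, Set.diff_eq_empty] at hne
      obtain ⟨k, hk, W', h1, h2, h3⟩ := ih W hWo hWne hne
      exact ⟨k, Finset.mem_insert_of_mem hk, W', h1, h2, h3⟩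

lemma LBase_zero : LBase r s 0 = (∅ : Set E₀) := by
  ext v
  simp only [LBase, Set.mem_setOf_eq, Set.mem_empty_iff_false, iff_false]
  rintro ⟨p, hp, -⟩
  omega
end TQ18

/-- `L∞ = ⋃ₙ Lₙ` has empty interior iff each
`Lₙˢ = Lₙ \ (L₁ ∪ ⋯ ∪ Lₙ₋₁)` has empty interior. -/
theorem stmt18 [TopologicalSpace E₀] [TopologicalSpace E₁]
    [SecondCountableTopology E₀] [SecondCountableTopology E₁]
    [LocallyCompactSpace E₀] [LocallyCompactSpace E₁] [T2Space E₀] [T2Space E₁]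
    (r s : E₁ → E₀) (hr : Continuous r) (hro : IsOpenMap r) (hs : Continuous s) :
    interior (⋃ n, LBase r s n) = ∅ ↔
      ∀ n : ℕ, interior (LBase r s n \ ⋃ k ∈ Set.Ico 1 n, LBase r s k) = ∅ := by
  constructor
  · intro h n
    have hsub : LBase r s n \ ⋃ k ∈ Set.Ico 1 n, LBase r s k ⊆ ⋃ m, LBase r s m :=
      Set.diff_subset.trans (Set.subset_iUnion _ n)
    have h2 := interior_mono hsub
    rw [h] at h2
    exact Set.subset_empty_iff.mp h2
  · intro hsimp
    by_contra hne
    obtain ⟨v₀, hv₀⟩ : (interior (⋃ n, LBase r s n)).Nonempty :=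
      Set.nonempty_iff_ne_empty.2 hne
    set V := interior (⋃ n, LBase r s n) with hVdef
    obtain ⟨p₀, hl₀, -⟩ := TQ18.exists_loop (interior_subset hv₀)
    haveI : Nonempty E₁ := ⟨p₀.edges 0⟩
    have hVo : IsOpen V := isOpen_interior
    haveI := hVo.locallyCompactSpace
    haveI : Nonempty V := ⟨⟨v₀, hv₀⟩⟩
    have hGon : ∀ k : ℕ, ContinuousOn ((TQ18.Gmap r s)^[k]) V := by
      intro k
      induction k with
      | zero => simpa using continuousOn_id
      | succ k ih =>
        rw [Function.iterate_succ]
        exact ih.comp (fun v hv => (TQ18.Gmap_contAt hro hs hv).continuousWithinAt)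
          (fun x hx => TQ18.Gmap_mem hro hs hx)
    have hGrc : ∀ k : ℕ, Continuous fun x : V => (TQ18.Gmap r s)^[k] (x : E₀) :=
      fun k => (hGon k).restrict
    let K : ℕ → Set V := fun n => {x : V | (TQ18.Gmap r s)^[n + 1] (x : E₀) = (x : E₀)}
    have hKc : ∀ n, IsClosed (K n) := fun n => isClosed_eq (hGrc (n + 1)) continuous_subtype_val
    have hcover : ⋃ n, K n = Set.univ := by
      ext x
      simp only [Set.mem_iUnion, Set.mem_univ, iff_true]
      have hxU : (x : E₀) ∈ ⋃ n, LBase r s n := interior_subset x.2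
      obtain ⟨_, ⟨m, rfl⟩, hm⟩ := hxU
      obtain ⟨p, hpn, -, -⟩ := id hm
      refine ⟨p.n, ?_⟩
      show (TQ18.Gmap r s)^[p.n + 1] (x : E₀) = (x : E₀)
      have hfix := TQ18.fix_of_mem hro hs x.2 hm
      rw [hpn]
      exact hfix
    obtain ⟨n, x, hx⟩ := nonempty_interior_of_iUnion_of_closed hKc hcover
    have hW₁o : IsOpen (Subtype.val '' interior (K n)) :=
      hVo.isOpenMap_subtype_val _ isOpen_interior
    have hW₁ne : (Subtype.val '' interior (K n)).Nonempty := ⟨x, x, hx, rfl⟩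
    have hW₁sub : Subtype.val '' interior (K n) ⊆ LBase r s (n + 1) ∩ V := by
      rintro y ⟨z, hz, rfl⟩
      have hzK : z ∈ K n := interior_subset hz
      exact ⟨TQ18.mem_of_fix hro hs (by omega) z.2 hzK, z.2⟩
    have hP : ∃ m, ∃ W : Set E₀, IsOpen W ∧ W.Nonempty ∧ W ⊆ LBase r s m ∩ V :=
      ⟨n + 1, _, hW₁o, hW₁ne, hW₁sub⟩
    classical
    set n₀ := Nat.find hP with hn₀def
    obtain ⟨W, hWo, hWne, hWsub⟩ := Nat.find_spec hP
    rw [← hn₀def] at hWsub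
    have hmin : ∀ k < n₀, ∀ W' : Set E₀, IsOpen W' → W'.Nonempty →
        ¬ W' ⊆ LBase r s k ∩ V := by
      intro k hk W' h1 h2 h3
      exact Nat.find_min hP hk ⟨W', h1, h2, h3⟩
    have hn₀pos : 1 ≤ n₀ := by
      by_contra h
      obtain ⟨w, hw⟩ := hWne
      have hmem := (hWsub hw).1
      have h0 : n₀ = 0 := by omega
      rw [h0, TQ18.LBase_zero] at hmem
      exact hmem
    have hclosedIn : ∀ k, 1 ≤ k → ∀ y, y ∈ V → y ∈ closure (LBase r s k ∩ V) →
        y ∈ LBase r s k := by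
      intro k hk y hyV hyc
      haveI : Filter.NeBot (nhdsWithin y (LBase r s k ∩ V)) :=
        mem_closure_iff_nhdsWithin_neBot.mp hyc
      have h1 : Filter.Tendsto ((TQ18.Gmap r s)^[k]) (nhdsWithin y (LBase r s k ∩ V))
          (nhds ((TQ18.Gmap r s)^[k] y)) :=
        ((hGon k).continuousWithinAt hyV).mono_left
          (nhdsWithin_mono y Set.inter_subset_right)
      have h2 : Filter.Tendsto ((TQ18.Gmap r s)^[k]) (nhdsWithin y (LBase r s k ∩ V))
          (nhds y) := by
        have hid : Filter.Tendsto id (nhdsWithin y (LBase r s k ∩ V)) (nhds y) :=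
          Filter.tendsto_id.mono_right nhdsWithin_le_nhds
        apply Filter.Tendsto.congr' _ hid
        filter_upwards [self_mem_nhdsWithin] with u hu
        exact (TQ18.fix_of_mem hro hs hu.2 hu.1).symm
      exact TQ18.mem_of_fix hro hs hk hyV (tendsto_nhds_unique h1 h2)
    set Wd := W \ ⋃ k ∈ Finset.Ico 1 n₀, closure (LBase r s k ∩ V) with hWd
    by_cases hWdne : Wd.Nonempty
    · have hWdo : IsOpen Wd := hWo.sdiff (Set.Finite.isClosed_biUnion
        (Finset.Ico 1 n₀).finite_toSet (fun k _ => isClosed_closure))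
      have hsub2 : Wd ⊆ LBase r s n₀ \ ⋃ k ∈ Set.Ico 1 n₀, LBase r s k := by
        rintro y ⟨hyW, hyn⟩
        refine ⟨(hWsub hyW).1, ?_⟩
        intro hy
        simp only [Set.mem_iUnion, Set.mem_Ico] at hy
        obtain ⟨k, ⟨hk1, hk2⟩, hk3⟩ := hy
        apply hyn
        apply Set.mem_biUnion (show k ∈ Finset.Ico 1 n₀ by simp [hk1, hk2])
        exact subset_closure ⟨hk3, (hWsub hyW).2⟩
      obtain ⟨w, hw⟩ := hWdne
      have : w ∈ interior (LBase r s n₀ \ ⋃ k ∈ Set.Ico 1 n₀, LBase r s k) :=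
        interior_maximal hsub2 hWdo hw
      rw [hsimp n₀] at this
      exact this
    · rw [Set.not_nonempty_iff_eq_empty, hWd, Set.diff_eq_empty] at hWdne
      obtain ⟨k, hk, W', hW'o, hW'ne, hW'sub⟩ := TQ18.open_sub_finite_closed
        (fun k => closure (LBase r s k ∩ V)) (fun k => isClosed_closure)
        (Finset.Ico 1 n₀) W hWo hWne hWdne
      simp only [Finset.mem_Ico] at hk
      apply hmin k hk.2 W' hW'o hW'ne
      intro y hy
      have hyV : y ∈ V := (hWsub (hW'sub hy).2).2
      exact ⟨hclosedIn k hk.1 y hyV (hW'sub hy).1, hyV⟩
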